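/- Let m, n be positive integers, λ_{ij} > 0 for 1 ≤ i ≤ m, 1 ≤ j ≤ n, α_i = ∑_{j=1}^n λ_{ij}, β_j = ∑_{i=1}^m λ_{ij}, and let ρ ≤ 2. Then the function t ↦ ln f(t), where f(t) = [∏_{i=1}^m Γ(1+α_i t) · ∏_{j=1}^n Γ(1+β_j t)] / [∏_{i=1}^m ∏_{j=1}^n Γ(1+λ_{ij} t)]^ρ, is convex on (0, ∞); that is, f is logarithmically convex on (0,∞). -/

import Mathlib

open Finset

open Filter MeasureTheory Set Topology

lemma aux_integral (t p : ℝ) (ht : 0 < t) (hp : 0 ≤ p) :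
    IntegrableOn (fun x => 2 / (t + x)^3) (Ioi p) ∧
    ∫ x in Ioi p, 2 / (t + x)^3 = 1 / (t + p)^2 := by
  have hne : ∀ x ∈ Ici p, (0:ℝ) < t + x := fun x hx => by
    have := hx.out; linarith
  have hderiv : ∀ x ∈ Ici p, HasDerivAt (fun x => -((t+x)^2)⁻¹) (2/(t+x)^3) x := by
    intro x hx
    have hx1 : (0:ℝ) < t + x := hne x hx
    have h1 : HasDerivAt (fun x : ℝ => t + x) 1 x := (hasDerivAt_id x).const_add t
    have h2 : HasDerivAt (fun x : ℝ => (t+x)^2) (2*(t+x)) x := by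
      have := h1.fun_pow 2
      simpa using this
    have h3 : HasDerivAt (fun x : ℝ => ((t+x)^2)⁻¹) (-(2*(t+x))/((t+x)^2)^2) x :=
      h2.inv (pow_ne_zero 2 hx1.ne')
    have h4 := h3.fun_neg
    refine h4.congr_deriv ?_
    rw [neg_div, neg_neg, div_eq_div_iff (by positivity) (by positivity)]
    ring
  have htend : Tendsto (fun x : ℝ => -((t+x)^2)⁻¹) atTop (𝓝 0) := by
    rw [show (0:ℝ) = -0 by ring]
    apply Tendsto.neg
    apply Tendsto.inv_tendsto_atTop
    exact (tendsto_pow_atTop (two_ne_zero)).comp (tendsto_atTop_add_const_left _ t tendsto_id)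
  have hpos : ∀ x ∈ Ioi p, 0 ≤ 2/(t+x)^3 := by
    intro x hx
    have : (0:ℝ) < t + x := hne x (le_of_lt hx.out)
    positivity
  refine ⟨integrableOn_Ioi_deriv_of_nonneg' hderiv hpos htend, ?_⟩
  rw [integral_Ioi_of_hasDerivAt_of_nonneg' hderiv hpos htend, zero_sub, neg_neg, one_div]

lemma aux_card_lt {N : ℕ} {y : ℝ}
    (h : ((Finset.range N).filter (fun j : ℕ => (1 + (j:ℝ)) < y)).Nonempty) :
    ((((Finset.range N).filter (fun j : ℕ => (1 + (j:ℝ)) < y)).card : ℝ)) < y := by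
  set S := (Finset.range N).filter (fun j : ℕ => (1 + (j:ℝ)) < y) with hS
  have hm := S.max'_mem h
  have h1 : (1 + (S.max' h : ℕ) : ℝ) < y := by
    have := (Finset.mem_filter.1 hm).2
    exact_mod_cast this
  have h2 : S ⊆ Finset.range (S.max' h + 1) := by
    intro j hj
    exact Finset.mem_range.2 (Nat.lt_succ_of_le (S.le_max' j hj))
  have h3 : S.card ≤ S.max' h + 1 := by
    simpa using Finset.card_le_card h2
  calc (S.card : ℝ) ≤ (S.max' h + 1 : ℕ) := by exact_mod_cast h3
    _ = 1 + (S.max' h : ℕ) := by push_cast; ring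
    _ < y := h1

lemma aux_count (a b x : ℝ) (ha : 0 < a) (hb : 0 < b) (hx : 0 < x) (M : ℕ) :
    ((Finset.range (M+1)).filter (fun j : ℕ => (1 + (j:ℝ)) < a*x)).card
      + ((Finset.range (M+1)).filter (fun j : ℕ => (1 + (j:ℝ)) < b*x)).card
    ≤ ((Finset.range (2*M+2)).filter (fun j : ℕ => (1 + (j:ℝ)) < (a+b)*x)).card := by
  set Sa := (Finset.range (M+1)).filter (fun j : ℕ => (1 + (j:ℝ)) < a*x) with hSa
  set Sb := (Finset.range (M+1)).filter (fun j : ℕ => (1 + (j:ℝ)) < b*x) with hSb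
  by_cases hz : Sa.card + Sb.card = 0
  · omega
  have hca : (Sa.card : ℝ) ≤ a * x := by
    rcases Finset.eq_empty_or_nonempty Sa with h | h
    · simp [h]; positivity
    · exact (aux_card_lt h).le
  have hcb : (Sb.card : ℝ) ≤ b * x := by
    rcases Finset.eq_empty_or_nonempty Sb with h | h
    · simp [h]; positivity
    · exact (aux_card_lt h).le
  have hstrict : (Sa.card + Sb.card : ℝ) < (a+b)*x := by
    rcases Nat.eq_zero_or_pos Sa.card with h0 | h0
    · have hbne : Sb.Nonempty := by
        rw [← Finset.card_pos]; omega
      have := aux_card_lt hbne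
      rw [h0]
      push_cast
      nlinarith
    · have hane : Sa.Nonempty := Finset.card_pos.1 h0
      have := aux_card_lt hane
      push_cast
      nlinarith
  have hsub : Finset.range (Sa.card + Sb.card)
      ⊆ (Finset.range (2*M+2)).filter (fun j : ℕ => (1 + (j:ℝ)) < (a+b)*x) := by
    intro j hj
    rw [Finset.mem_range] at hj
    have hA : Sa.card ≤ M+1 := by
      rw [hSa]
      simpa using Finset.card_le_card (Finset.filter_subset (fun j : ℕ => (1 + (j:ℝ)) < a*x) (Finset.range (M+1)))
    have hB : Sb.card ≤ M+1 := by
      rw [hSb]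
      simpa using Finset.card_le_card (Finset.filter_subset (fun j : ℕ => (1 + (j:ℝ)) < b*x) (Finset.range (M+1)))
    refine Finset.mem_filter.2 ⟨Finset.mem_range.2 (by omega), ?_⟩
    have : (1 + j : ℝ) ≤ (Sa.card + Sb.card : ℕ) := by
      exact_mod_cast Nat.one_add_le_iff.2 hj
    calc (1+j:ℝ) ≤ (Sa.card + Sb.card : ℕ) := this
      _ < (a+b)*x := by push_cast; push_cast at hstrict; linarith
  calc Sa.card + Sb.card = (Finset.range (Sa.card + Sb.card)).card := by simp
    _ ≤ _ := Finset.card_le_card hsub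

lemma aux_pointwise (t c x : ℝ) (hc : 0 < c) (hx : 0 < x) (N : ℕ) :
    ∑ j ∈ Finset.range N, indicator (Ioi ((1+(j:ℝ))/c)) (fun x => 2/(t+x)^3) x
    = (((Finset.range N).filter (fun j : ℕ => (1 + (j:ℝ)) < c*x)).card : ℝ) * (2/(t+x)^3) := by
  rw [Finset.sum_indicator_eq_sum_filter, Finset.sum_const, nsmul_eq_mul]
  congr 2
  apply congrArg
  apply Finset.filter_congr
  intro j _
  simp only [Set.mem_Ioi, div_lt_iff₀ hc, eq_iff_iff]
  constructor
  · intro h; linarith [h]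
  · intro h; linarith [h]

lemma aux_count_integrable (t c : ℝ) (ht : 0 < t) (hc : 0 < c) (N : ℕ) :
    IntegrableOn (fun x =>
      (((Finset.range N).filter (fun j : ℕ => (1 + (j:ℝ)) < c*x)).card : ℝ) * (2/(t+x)^3))
      (Ioi (0:ℝ)) := by
  have hsum : IntegrableOn
      (fun x => ∑ j ∈ Finset.range N, indicator (Ioi ((1+(j:ℝ))/c)) (fun x => 2/(t+x)^3) x)
      (Ioi (0:ℝ)) := by
    apply MeasureTheory.integrable_finset_sum
    intro j _
    have hp : (0:ℝ) ≤ (1+j)/c := by positivity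
    exact (((aux_integral t ((1+j)/c) ht hp).1).integrable_indicator measurableSet_Ioi).integrableOn
  apply hsum.congr_fun _ measurableSet_Ioi
  intro x hx
  exact aux_pointwise t c x hc hx N

-- sum of 1/(t+p_j)^2 as integral of counting function
lemma aux_sum_integral (t c : ℝ) (ht : 0 < t) (hc : 0 < c) (N : ℕ) :
    ∑ j ∈ Finset.range N, c^2/(1+c*t+j)^2
      = ∫ x in Ioi (0:ℝ),
          (((Finset.range N).filter (fun j : ℕ => (1 + (j:ℝ)) < c*x)).card : ℝ) * (2/(t+x)^3) := by
  have key : ∀ j ∈ Finset.range N, c^2/(1+c*t+j)^2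
      = ∫ x in Ioi (0:ℝ), indicator (Ioi ((1+j)/c)) (fun x => 2/(t+x)^3) x := by
    intro j _
    have hp : (0:ℝ) ≤ (1+j)/c := by positivity
    have h := aux_integral t ((1+j)/c) ht hp
    rw [setIntegral_indicator measurableSet_Ioi]
    have hiu : Ioi (0:ℝ) ∩ Ioi ((1+j)/c) = Ioi ((1+j)/c) := by
      rw [Set.Ioi_inter_Ioi, max_eq_right hp]
    rw [hiu, h.2]
    rw [div_eq_div_iff (by positivity) (by positivity)]
    have : 1 + c*t + (j:ℝ) = c * (t + (1+j)/c) := by field_simp; ring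
    rw [this]
    ring
  rw [Finset.sum_congr rfl key, ← integral_finset_sum]
  · apply setIntegral_congr_fun measurableSet_Ioi
    intro x hx
    have hx0 : (0:ℝ) < x := hx
    simp only
    rw [Finset.sum_indicator_eq_sum_filter]
    rw [Finset.sum_const, nsmul_eq_mul]
    congr 2
    apply congrArg
    apply Finset.filter_congr
    intro j _
    simp only [Set.mem_Ioi, div_lt_iff₀ hc, eq_iff_iff]
    constructor
    · intro h; linarith [h]
    · intro h; linarith [h]
  · intro j _
    have hp : (0:ℝ) ≤ (1+j)/c := by positivity
    exact (((aux_integral t ((1+j)/c) ht hp).1).integrable_indicator measurableSet_Ioi).integrableOn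

lemma key_ineq (a b t : ℝ) (ha : 0 < a) (hb : 0 < b) (ht : 0 < t) (M : ℕ) :
    ∑ j ∈ Finset.range (M+1), a^2/(1+a*t+j)^2 + ∑ j ∈ Finset.range (M+1), b^2/(1+b*t+j)^2
    ≤ ∑ j ∈ Finset.range (2*M+2), (a+b)^2/(1+(a+b)*t+j)^2 := by
  rw [aux_sum_integral t a ht ha, aux_sum_integral t b ht hb,
    aux_sum_integral t (a+b) ht (by linarith)]
  rw [← integral_add (aux_count_integrable t a ht ha _) (aux_count_integrable t b ht hb _)]
  apply setIntegral_mono_on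
  · exact (aux_count_integrable t a ht ha _).add (aux_count_integrable t b ht hb _)
  · exact aux_count_integrable t (a+b) ht (by linarith) _
  · exact measurableSet_Ioi
  · intro x hx
    have hx0 : (0:ℝ) < x := hx
    have hg : (0:ℝ) ≤ 2/(t+x)^3 := by positivity
    rw [← add_mul]
    apply mul_le_mul_of_nonneg_right _ hg
    exact_mod_cast aux_count a b x ha hb hx0 M

lemma aux_pos (c t : ℝ) (hc : 0 < c) (ht : 0 < t) (j : ℕ) : (0:ℝ) < 1 + c*t + j := by
  have : (0:ℝ) ≤ (j:ℝ) := Nat.cast_nonneg j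
  nlinarith

lemma aux_d1 (c : ℝ) (N : ℕ) (hc : 0 < c) {t : ℝ} (ht : 0 < t) :
    HasDerivAt (fun t => ∑ j ∈ Finset.range N, Real.log (1+c*t+j))
      (∑ j ∈ Finset.range N, c/(1+c*t+j)) t := by
  apply HasDerivAt.fun_sum
  intro j _
  have hpos := aux_pos c t hc ht j
  have h1 : HasDerivAt (fun t : ℝ => 1 + c*t + j) c t := by
    simpa using (((hasDerivAt_id t).const_mul c).const_add 1).add_const (j:ℝ)
  exact h1.log hpos.ne'

lemma aux_d2 (c : ℝ) (N : ℕ) (hc : 0 < c) {t : ℝ} (ht : 0 < t) :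
    HasDerivAt (fun t => ∑ j ∈ Finset.range N, c/(1+c*t+j))
      (-∑ j ∈ Finset.range N, c^2/(1+c*t+j)^2) t := by
  rw [← Finset.sum_neg_distrib]
  apply HasDerivAt.fun_sum
  intro j _
  have hpos := aux_pos c t hc ht j
  have h1 : HasDerivAt (fun t : ℝ => 1 + c*t + j) c t := by
    simpa using (((hasDerivAt_id t).const_mul c).const_add 1).add_const (j:ℝ)
  have h2 := (h1.inv hpos.ne').const_mul c
  refine h2.congr_deriv ?_
  field_simp

lemma aux_convex_trunc (a b : ℝ) (ha : 0 < a) (hb : 0 < b) (M : ℕ) (k0 k1 : ℝ) :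
    ConvexOn ℝ (Ioi (0:ℝ)) (fun t => k1*t + k0 +
      (∑ j ∈ Finset.range (M+1), Real.log (1+a*t+j)
        + ∑ j ∈ Finset.range (M+1), Real.log (1+b*t+j)
        - ∑ j ∈ Finset.range (2*M+2), Real.log (1+(a+b)*t+j))) := by
  have hab : 0 < a + b := by linarith
  set Ψ1 : ℝ → ℝ := fun t => k1 +
    (∑ j ∈ Finset.range (M+1), a/(1+a*t+j) + ∑ j ∈ Finset.range (M+1), b/(1+b*t+j)
      - ∑ j ∈ Finset.range (2*M+2), (a+b)/(1+(a+b)*t+j)) with hΨ1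
  set Ψ2 : ℝ → ℝ := fun t =>
    ∑ j ∈ Finset.range (2*M+2), (a+b)^2/(1+(a+b)*t+j)^2
      - ∑ j ∈ Finset.range (M+1), a^2/(1+a*t+j)^2
      - ∑ j ∈ Finset.range (M+1), b^2/(1+b*t+j)^2 with hΨ2
  have hd1 : ∀ t ∈ Ioi (0:ℝ), HasDerivAt (fun t => k1*t + k0 +
      (∑ j ∈ Finset.range (M+1), Real.log (1+a*t+j)
        + ∑ j ∈ Finset.range (M+1), Real.log (1+b*t+j)
        - ∑ j ∈ Finset.range (2*M+2), Real.log (1+(a+b)*t+j))) (Ψ1 t) t := by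
    intro t ht
    have h0 : HasDerivAt (fun t : ℝ => k1*t + k0) k1 t := by
      simpa using ((hasDerivAt_id t).const_mul k1).add_const k0
    exact h0.add (((aux_d1 a (M+1) ha ht).add (aux_d1 b (M+1) hb ht)).sub
      (aux_d1 (a+b) (2*M+2) hab ht))
  have hd2 : ∀ t ∈ Ioi (0:ℝ), HasDerivAt Ψ1 (Ψ2 t) t := by
    intro t ht
    have h0 : HasDerivAt (fun _ : ℝ => k1) 0 t := hasDerivAt_const t k1
    have := h0.fun_add (((aux_d2 a (M+1) ha ht).fun_add (aux_d2 b (M+1) hb ht)).fun_sub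
      (aux_d2 (a+b) (2*M+2) hab ht))
    refine this.congr_deriv ?_
    rw [hΨ2]
    ring
  apply convexOn_of_deriv2_nonneg (convex_Ioi 0)
  · intro t ht
    exact (hd1 t ht).continuousAt.continuousWithinAt
  · rw [interior_Ioi]
    intro t ht
    exact (hd1 t ht).differentiableAt.differentiableWithinAt
  · rw [interior_Ioi]
    intro t ht
    have hev : deriv (fun t => k1*t + k0 +
      (∑ j ∈ Finset.range (M+1), Real.log (1+a*t+j)
        + ∑ j ∈ Finset.range (M+1), Real.log (1+b*t+j)
        - ∑ j ∈ Finset.range (2*M+2), Real.log (1+(a+b)*t+j))) =ᶠ[𝓝 t] Ψ1 := by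
      filter_upwards [Ioi_mem_nhds ht.out] with s hs
      exact (hd1 s hs).deriv
    apply DifferentiableAt.differentiableWithinAt
    rw [hev.differentiableAt_iff]
    exact (hd2 t ht).differentiableAt
  · rw [interior_Ioi]
    intro t ht
    have hev : deriv (fun t => k1*t + k0 +
      (∑ j ∈ Finset.range (M+1), Real.log (1+a*t+j)
        + ∑ j ∈ Finset.range (M+1), Real.log (1+b*t+j)
        - ∑ j ∈ Finset.range (2*M+2), Real.log (1+(a+b)*t+j))) =ᶠ[𝓝 t] Ψ1 := by
      filter_upwards [Ioi_mem_nhds ht.out] with s hs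
      exact (hd1 s hs).deriv
    have : deriv^[2] (fun t => k1*t + k0 +
      (∑ j ∈ Finset.range (M+1), Real.log (1+a*t+j)
        + ∑ j ∈ Finset.range (M+1), Real.log (1+b*t+j)
        - ∑ j ∈ Finset.range (2*M+2), Real.log (1+(a+b)*t+j))) t = Ψ2 t := by
      show deriv (deriv _) t = _
      rw [hev.deriv_eq]
      exact (hd2 t ht).deriv
    rw [this, hΨ2]
    have := key_ineq a b t ha hb ht.out M
    linarith

lemma aux_log_gammaseq (s : ℝ) (hs : 0 < s) (n : ℕ) (hn : 1 ≤ n) :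
    Real.log (Real.GammaSeq s n)
      = s * Real.log n + Real.log (n.factorial) - ∑ j ∈ Finset.range (n+1), Real.log (s+j) := by
  have hn0 : (0:ℝ) < n := by exact_mod_cast hn
  have hterm : ∀ j ∈ Finset.range (n+1), s + (j:ℝ) ≠ 0 := by
    intro j _
    have : (0:ℝ) ≤ (j:ℝ) := Nat.cast_nonneg j
    positivity
  have hprod : (0:ℝ) < ∏ j ∈ Finset.range (n+1), (s+(j:ℝ)) := by
    apply Finset.prod_pos
    intro j _
    have : (0:ℝ) ≤ (j:ℝ) := Nat.cast_nonneg j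
    positivity
  rw [Real.GammaSeq, Real.log_div (by positivity) hprod.ne', Real.log_mul (by positivity)
    (by positivity), Real.log_rpow hn0, Real.log_prod hterm]

lemma aux_core (a b : ℝ) (ha : 0 < a) (hb : 0 < b) :
    ConvexOn ℝ (Ioi (0:ℝ)) (fun t => Real.log (Real.Gamma (1+(a+b)*t))
      - Real.log (Real.Gamma (1+a*t)) - Real.log (Real.Gamma (1+b*t))) := by
  have hab : 0 < a + b := by linarith
  set Φ : ℕ → ℝ → ℝ := fun M t =>
    Real.log (Real.GammaSeq (1+(a+b)*t) (2*M+1)) - Real.log (Real.GammaSeq (1+a*t) M)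
      - Real.log (Real.GammaSeq (1+b*t) M) with hΦ
  have hpos : ∀ (c t : ℝ), 0 < c → t ∈ Ioi (0:ℝ) → (0:ℝ) < 1 + c*t := by
    intro c t hc ht
    have := ht.out
    nlinarith
  have htend : ∀ t ∈ Ioi (0:ℝ), Tendsto (fun M : ℕ => Φ M t) atTop
      (𝓝 (Real.log (Real.Gamma (1+(a+b)*t)) - Real.log (Real.Gamma (1+a*t))
        - Real.log (Real.Gamma (1+b*t)))) := by
    intro t ht
    have hg : ∀ (c : ℝ), 0 < c → Real.Gamma (1+c*t) ≠ 0 := fun c hc =>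
      (Real.Gamma_pos_of_pos (hpos c t hc ht)).ne'
    have t1 : Tendsto (fun M : ℕ => Real.GammaSeq (1+(a+b)*t) (2*M+1)) atTop
        (𝓝 (Real.Gamma (1+(a+b)*t))) := by
      apply (Real.GammaSeq_tendsto_Gamma (1+(a+b)*t)).comp
      apply tendsto_atTop_mono (fun M => by omega : ∀ M : ℕ, M ≤ 2*M+1) tendsto_id
    have t2 := Real.GammaSeq_tendsto_Gamma (1+a*t)
    have t3 := Real.GammaSeq_tendsto_Gamma (1+b*t)
    exact ((t1.log (hg _ hab)).sub (t2.log (hg a ha))).sub (t3.log (hg b hb))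
  constructor
  · exact convex_Ioi 0
  intro x hx y hy μ ν hμ hν hμν
  have hz : μ • x + ν • y ∈ Ioi (0:ℝ) := (convex_Ioi 0) hx hy hμ hν hμν
  have hineq : ∀ M : ℕ, 1 ≤ M → Φ M (μ•x+ν•y) ≤ μ * Φ M x + ν * Φ M y := by
    intro M hM
    set k1 : ℝ := (a+b) * Real.log (2*M+1) - a * Real.log M - b * Real.log M with hk1
    set k0 : ℝ := Real.log (2*M+1) + Real.log ((2*M+1).factorial)
      - 2 * Real.log M - 2 * Real.log (M.factorial) with hk0
    have hform : ∀ t ∈ Ioi (0:ℝ), Φ M t = k1*t + k0 +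
        (∑ j ∈ Finset.range (M+1), Real.log (1+a*t+j)
          + ∑ j ∈ Finset.range (M+1), Real.log (1+b*t+j)
          - ∑ j ∈ Finset.range (2*M+2), Real.log (1+(a+b)*t+j)) := by
      intro t ht
      rw [hΦ]
      simp only
      rw [aux_log_gammaseq _ (hpos _ t hab ht) (2*M+1) (by omega),
        aux_log_gammaseq _ (hpos a t ha ht) M hM,
        aux_log_gammaseq _ (hpos b t hb ht) M hM]
      have hc2 : ((2*M+1 : ℕ) : ℝ) = (2*(M:ℝ)+1) := by push_cast; ring
      have hr : Finset.range (2*M+1+1) = Finset.range (2*M+2) := by norm_num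
      rw [hc2, hr, hk1, hk0]
      ring
    have hcv := (aux_convex_trunc a b ha hb M k0 k1).2 hx hy hμ hν hμν
    rw [hform _ hz, hform _ hx, hform _ hy]
    simpa [smul_eq_mul] using hcv
  refine le_of_tendsto_of_tendsto (htend _ hz)
    (((htend x hx).const_mul μ).add ((htend y hy).const_mul ν)) ?_
  filter_upwards [eventually_ge_atTop 1] with M hM
  have := hineq M hM
  simpa [smul_eq_mul] using this

lemma aux_sum_convex {ι : Type*} (s : Finset ι) (F : ι → ℝ → ℝ)
    (h : ∀ i ∈ s, ConvexOn ℝ (Ioi (0:ℝ)) (F i)) :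
    ConvexOn ℝ (Ioi (0:ℝ)) (fun t => ∑ i ∈ s, F i t) := by
  classical
  induction s using Finset.induction_on with
  | empty => simpa using convexOn_const (0:ℝ) (convex_Ioi 0)
  | insert _ _ hi ih =>
    rename_i i s'
    simp only [Finset.sum_insert hi]
    exact (h i (Finset.mem_insert_self i s')).add
      (ih fun j hj => h j (Finset.mem_insert_of_mem hj))

lemma aux_core' (a b : ℝ) (ha : 0 < a) (hb : 0 ≤ b) :
    ConvexOn ℝ (Ioi (0:ℝ)) (fun t => Real.log (Real.Gamma (1+(a+b)*t))
      - Real.log (Real.Gamma (1+a*t)) - Real.log (Real.Gamma (1+b*t))) := by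
  rcases hb.eq_or_lt with rfl | hb'
  · have heq : (fun t : ℝ => Real.log (Real.Gamma (1+(a+0)*t))
        - Real.log (Real.Gamma (1+a*t)) - Real.log (Real.Gamma (1+0*t))) = fun _ => 0 := by
      funext t
      simp [Real.Gamma_one]
    rw [heq]
    exact convexOn_const (0:ℝ) (convex_Ioi 0)
  · exact aux_core a b ha hb'

lemma aux_key {ι : Type*} (c : ι → ℝ) (hc : ∀ i, 0 < c i) (s : Finset ι) :
    ConvexOn ℝ (Ioi (0:ℝ)) (fun t => Real.log (Real.Gamma (1 + (∑ i ∈ s, c i)*t))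
      - ∑ i ∈ s, Real.log (Real.Gamma (1 + c i * t))) := by
  classical
  induction s using Finset.induction_on with
  | empty =>
    have heq : (fun t : ℝ => Real.log (Real.Gamma (1 + (∑ i ∈ (∅: Finset ι), c i)*t))
        - ∑ i ∈ (∅: Finset ι), Real.log (Real.Gamma (1 + c i * t))) = fun _ => 0 := by
      funext t
      simp [Real.Gamma_one]
    rw [heq]
    exact convexOn_const (0:ℝ) (convex_Ioi 0)
  | insert _ _ hi ih =>
    rename_i i s'
    have hS : (0:ℝ) ≤ ∑ j ∈ s', c j := Finset.sum_nonneg fun j _ => (hc j).le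
    have h1 := aux_core' (c i) (∑ j ∈ s', c j) (hc i) hS
    have heq : (fun t : ℝ => Real.log (Real.Gamma (1 + (∑ j ∈ insert i s', c j)*t))
        - ∑ j ∈ insert i s', Real.log (Real.Gamma (1 + c j * t)))
      = fun t => (Real.log (Real.Gamma (1+(c i + ∑ j ∈ s', c j)*t))
          - Real.log (Real.Gamma (1+ c i * t)) - Real.log (Real.Gamma (1+(∑ j ∈ s', c j)*t)))
        + (Real.log (Real.Gamma (1 + (∑ j ∈ s', c j)*t))
          - ∑ j ∈ s', Real.log (Real.Gamma (1 + c j * t))) := by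
      funext t
      rw [Finset.sum_insert hi, Finset.sum_insert hi]
      ring
    rw [heq]
    exact h1.add ih

lemma aux_conv_G (c : ℝ) (hc : 0 ≤ c) :
    ConvexOn ℝ (Ioi (0:ℝ)) (fun t => Real.log (Real.Gamma (1 + c*t))) := by
  constructor
  · exact convex_Ioi 0
  intro x hx y hy μ ν hμ hν hμν
  have hmem : ∀ t ∈ Ioi (0:ℝ), (1 + c*t) ∈ Ioi (0:ℝ) := by
    intro t ht
    have := ht.out
    have : 0 ≤ c * t := by positivity
    simp only [Set.mem_Ioi]
    linarith
  have h := Real.convexOn_log_Gamma.2 (hmem x hx) (hmem y hy) hμ hν hμν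
  have harg : μ • (1+c*x) + ν • (1+c*y) = 1 + c*(μ • x + ν • y) := by
    simp only [smul_eq_mul]
    nlinarith [hμν]
  rw [harg] at h
  simpa using h

lemma aux_congr {f g : ℝ → ℝ} (h : ConvexOn ℝ (Ioi (0:ℝ)) f)
    (he : ∀ t ∈ Ioi (0:ℝ), f t = g t) : ConvexOn ℝ (Ioi (0:ℝ)) g := by
  refine ⟨h.1, fun x hx y hy μ ν hμ hν hμν => ?_⟩
  have hz := (convex_Ioi (0:ℝ)) hx hy hμ hν hμν
  rw [← he _ hz, ← he _ hx, ← he _ hy]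
  exact h.2 hx hy hμ hν hμν

theorem log_convex_ratio_gamma
    (m n : ℕ) (hm : 0 < m) (hn : 0 < n)
    (lam : Fin m → Fin n → ℝ) (hlam : ∀ i j, 0 < lam i j)
    (α : Fin m → ℝ) (hα : ∀ i, α i = ∑ j : Fin n, lam i j)
    (β : Fin n → ℝ) (hβ : ∀ j, β j = ∑ i : Fin m, lam i j)
    (ρ : ℝ) (hρ : ρ ≤ 2)
    (f : ℝ → ℝ)
    (hf : ∀ t, f t =
      ((∏ i : Fin m, Real.Gamma (1 + α i * t)) * ∏ j : Fin n, Real.Gamma (1 + β j * t)) /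
        (∏ i : Fin m, ∏ j : Fin n, Real.Gamma (1 + lam i j * t)) ^ ρ) :
    ConvexOn ℝ (Set.Ioi (0 : ℝ)) (fun t => Real.log (f t)) := by
  have hαpos : ∀ i, 0 ≤ α i := fun i => by
    rw [hα i]; exact Finset.sum_nonneg fun j _ => (hlam i j).le
  have hβpos : ∀ j, 0 ≤ β j := fun j => by
    rw [hβ j]; exact Finset.sum_nonneg fun i _ => (hlam i j).le
  -- the convex decomposition
  set Φ : ℝ → ℝ := fun t =>
    (∑ i : Fin m, (Real.log (Real.Gamma (1 + α i * t))
        - ∑ j : Fin n, Real.log (Real.Gamma (1 + lam i j * t))))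
    + (∑ j : Fin n, (Real.log (Real.Gamma (1 + β j * t))
        - ∑ i : Fin m, Real.log (Real.Gamma (1 + lam i j * t))))
    + (2 - ρ) * (∑ i : Fin m, ∑ j : Fin n, Real.log (Real.Gamma (1 + lam i j * t))) with hΦ
  have hconv : ConvexOn ℝ (Ioi (0:ℝ)) Φ := by
    apply ConvexOn.add
    apply ConvexOn.add
    · apply aux_sum_convex
      intro i _
      have h := aux_key (fun j => lam i j) (hlam i) Finset.univ
      have heq : (fun t : ℝ => Real.log (Real.Gamma (1 + (∑ j : Fin n, lam i j)*t))
            - ∑ j : Fin n, Real.log (Real.Gamma (1 + lam i j * t)))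
          = fun t => Real.log (Real.Gamma (1 + α i * t))
            - ∑ j : Fin n, Real.log (Real.Gamma (1 + lam i j * t)) := by
        funext t
        rw [hα i]
      rw [heq] at h
      exact h
    · apply aux_sum_convex
      intro j _
      have h := aux_key (fun i => lam i j) (fun i => hlam i j) Finset.univ
      have heq : (fun t : ℝ => Real.log (Real.Gamma (1 + (∑ i : Fin m, lam i j)*t))
            - ∑ i : Fin m, Real.log (Real.Gamma (1 + lam i j * t)))
          = fun t => Real.log (Real.Gamma (1 + β j * t))
            - ∑ i : Fin m, Real.log (Real.Gamma (1 + lam i j * t)) := by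
        funext t
        rw [hβ j]
      rw [heq] at h
      exact h
    · have h : ConvexOn ℝ (Ioi (0:ℝ)) (fun t =>
          ∑ i : Fin m, ∑ j : Fin n, Real.log (Real.Gamma (1 + lam i j * t))) := by
        apply aux_sum_convex
        intro i _
        apply aux_sum_convex
        intro j _
        exact aux_conv_G (lam i j) (hlam i j).le
      have h2 := h.smul (by linarith : (0:ℝ) ≤ 2 - ρ)
      simpa [smul_eq_mul] using h2
  apply aux_congr hconv
  intro t ht
  have ht0 : (0:ℝ) < t := ht
  have hgpos : ∀ (c : ℝ), 0 ≤ c → (0:ℝ) < Real.Gamma (1 + c*t) := by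
    intro c hc
    apply Real.Gamma_pos_of_pos
    have : 0 ≤ c * t := by positivity
    linarith
  have hP1 : (0:ℝ) < ∏ i : Fin m, Real.Gamma (1 + α i * t) :=
    Finset.prod_pos fun i _ => hgpos _ (hαpos i)
  have hP2 : (0:ℝ) < ∏ j : Fin n, Real.Gamma (1 + β j * t) :=
    Finset.prod_pos fun j _ => hgpos _ (hβpos j)
  have hP3 : (0:ℝ) < ∏ i : Fin m, ∏ j : Fin n, Real.Gamma (1 + lam i j * t) :=
    Finset.prod_pos fun i _ => Finset.prod_pos fun j _ => hgpos _ (hlam i j).le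
  rw [hf t, Real.log_div (by positivity) (by positivity),
    Real.log_mul hP1.ne' hP2.ne', Real.log_rpow hP3,
    Real.log_prod (fun i _ => (hgpos _ (hαpos i)).ne'),
    Real.log_prod (fun j _ => (hgpos _ (hβpos j)).ne'),
    Real.log_prod (fun i _ => (Finset.prod_pos fun j _ => hgpos _ (hlam i j).le).ne')]
  have hinner : ∀ i : Fin m, Real.log (∏ j : Fin n, Real.Gamma (1 + lam i j * t))
      = ∑ j : Fin n, Real.log (Real.Gamma (1 + lam i j * t)) := by
    intro i
    exact Real.log_prod (fun j _ => (hgpos _ (hlam i j).le).ne')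
  rw [Finset.sum_congr rfl (fun i _ => hinner i)]
  simp only [hΦ, Finset.sum_sub_distrib]
  rw [show ∑ j : Fin n, ∑ i : Fin m, Real.log (Real.Gamma (1 + lam i j * t))
      = ∑ i : Fin m, ∑ j : Fin n, Real.log (Real.Gamma (1 + lam i j * t)) from Finset.sum_comm]
  ring
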